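/- Let G be a finite simple graph with vertex set {1,...,n}. Let D^r be the orientation directing every edge from its smaller endpoint to its larger endpoint, and D^l the orientation directing every edge from larger to smaller. Then for every orientation D of G, the out-degree vector of D^l is dominated by the out-degree vector of D, which is dominated by the out-degree vector of D^r, where vector s is dominated by t iff all partial sums satisfy ∑_{i≤k} s_i ≤ ∑_{i≤k} t_i for all k, with equality at k = n. -/

import Mathlib

/-- `D` is an orientation of `G`: each edge gets exactly one direction. -/
def IsOrientation {n : ℕ} (G : SimpleGraph (Fin n)) (D : Fin n → Fin n → Bool) : Prop :=
  ∀ u v : Fin n, (G.Adj u v → D u v = !D v u) ∧ (¬ G.Adj u v → D u v = false)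

/-- Out-degree of `v` in the orientation `D`. -/
def outDeg {n : ℕ} (D : Fin n → Fin n → Bool) (v : Fin n) : ℕ :=
  (Finset.univ.filter (fun w => D v w = true)).card

/-- Partial sum of the first `k` entries of a vector indexed by `Fin n`. -/
def partialSum {n : ℕ} (s : Fin n → ℕ) (k : ℕ) : ℕ :=
  ∑ i ∈ Finset.univ.filter (fun i : Fin n => i.val < k), s i

/-- The dominance order `s ≼ t`. -/
def Preceq {n : ℕ} (s t : Fin n → ℕ) : Prop :=
  (∀ k : ℕ, k ≤ n → partialSum s k ≤ partialSum t k) ∧ partialSum s n = partialSum t n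

/-- The set of arcs of `D` whose tail is among the first `k` vertices. -/
def arcSet {n : ℕ} (D : Fin n → Fin n → Bool) (k : ℕ) : Finset (Fin n × Fin n) :=
  Finset.univ.filter (fun p => p.1.val < k ∧ D p.1 p.2 = true)

lemma mem_arcSet {n : ℕ} {D : Fin n → Fin n → Bool} {k : ℕ} {p : Fin n × Fin n} :
    p ∈ arcSet D k ↔ p.1.val < k ∧ D p.1 p.2 = true := by
  simp [arcSet]

lemma psum_eq {n : ℕ} (D : Fin n → Fin n → Bool) (k : ℕ) :
    partialSum (outDeg D) k = (arcSet D k).card := by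
  rw [partialSum, Finset.sum_filter, arcSet, Finset.card_filter,
    ← Finset.univ_product_univ, Finset.sum_product]
  refine Finset.sum_congr rfl fun v _ => ?_
  by_cases h : v.val < k
  · rw [if_pos h, outDeg, Finset.card_filter]
    exact Finset.sum_congr rfl fun w _ => by simp [h]
  · simp [h]

lemma left_le {n : ℕ} (G : SimpleGraph (Fin n)) [DecidableRel G.Adj]
    (D : Fin n → Fin n → Bool) (hD : IsOrientation G D) (k : ℕ) :
    (arcSet (fun u v => decide (G.Adj u v ∧ v < u)) k).card ≤ (arcSet D k).card := by
  apply Finset.card_le_card_of_injOn (fun p => if D p.1 p.2 = true then p else (p.2, p.1))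
  · intro p hp
    rw [Finset.mem_coe, mem_arcSet] at hp
    obtain ⟨hk, hd⟩ := hp
    rw [decide_eq_true_iff] at hd
    obtain ⟨hadj, hlt⟩ := hd
    have h2k : p.2.val < k := lt_trans hlt hk
    by_cases h : D p.1 p.2 = true
    · simp only [h, if_true]
      exact mem_arcSet.mpr ⟨hk, h⟩
    · have := (hD p.1 p.2).1 hadj
      simp only [Bool.not_eq_true] at h
      rw [h] at this
      have h21 : D p.2 p.1 = true := by
        cases hdd : D p.2 p.1
        · rw [hdd] at this; simp at this
        · rfl
      dsimp only
      rw [if_neg (by simp [h])]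
      exact mem_arcSet.mpr ⟨h2k, h21⟩
  · intro p hp q hq hfq
    simp only [Finset.coe_filter, Set.mem_setOf_eq, arcSet, Finset.mem_filter] at hp hq
    have hpl : p.2 < p.1 := (decide_eq_true_iff.mp hp.2.2).2
    have hql : q.2 < q.1 := (decide_eq_true_iff.mp hq.2.2).2
    dsimp only at hfq
    split_ifs at hfq with h1 h2 h2
    · exact hfq
    · rw [Prod.ext_iff] at hfq
      exact absurd (hfq.1 ▸ hfq.2 ▸ hql) (asymm hpl)
    · rw [Prod.ext_iff] at hfq
      dsimp at hfq
      have : p.1 = q.2 := hfq.2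
      have h2 : p.2 = q.1 := hfq.1
      exact absurd (this ▸ h2 ▸ hpl) (asymm hql)
    · rw [Prod.ext_iff] at hfq
      exact Prod.ext hfq.2 hfq.1

lemma right_le {n : ℕ} (G : SimpleGraph (Fin n)) [DecidableRel G.Adj]
    (D : Fin n → Fin n → Bool) (hD : IsOrientation G D) (k : ℕ) :
    (arcSet D k).card ≤ (arcSet (fun u v => decide (G.Adj u v ∧ u < v)) k).card := by
  apply Finset.card_le_card_of_injOn (fun p => if p.1 < p.2 then p else (p.2, p.1))
  · intro p hp
    rw [Finset.mem_coe, mem_arcSet] at hp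
    obtain ⟨hk, hd⟩ := hp
    have hadj : G.Adj p.1 p.2 := by
      by_contra hna
      rw [(hD p.1 p.2).2 hna] at hd; exact absurd hd (by simp)
    have hne : p.1 ≠ p.2 := G.ne_of_adj hadj
    by_cases h : p.1 < p.2
    · dsimp only
      rw [if_pos h]
      exact mem_arcSet.mpr ⟨hk, decide_eq_true_iff.mpr ⟨hadj, h⟩⟩
    · have hlt : p.2 < p.1 := lt_of_le_of_ne (not_lt.mp h) (Ne.symm hne)
      dsimp only
      rw [if_neg h]
      exact mem_arcSet.mpr ⟨lt_trans hlt hk, decide_eq_true_iff.mpr ⟨hadj.symm, hlt⟩⟩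
  · intro p hp q hq hfq
    simp only [Finset.coe_filter, Set.mem_setOf_eq, arcSet, Finset.mem_filter] at hp hq
    have hdp : D p.1 p.2 = true := hp.2.2
    have hdq : D q.1 q.2 = true := hq.2.2
    have hswap : p = q ∨ (p.1 = q.2 ∧ p.2 = q.1) := by
      dsimp only at hfq
      split_ifs at hfq <;> rw [Prod.ext_iff] at hfq
      · exact Or.inl (Prod.ext hfq.1 hfq.2)
      · exact Or.inr ⟨hfq.1, hfq.2⟩
      · exact Or.inr ⟨hfq.2, hfq.1⟩
      · exact Or.inl (Prod.ext hfq.2 hfq.1)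
    rcases hswap with h | ⟨h1, h2⟩
    · exact h
    · exfalso
      have hadq : G.Adj q.1 q.2 := by
        by_contra hna
        rw [(hD q.1 q.2).2 hna] at hdq; exact absurd hdq (by simp)
      have := (hD q.1 q.2).1 hadq
      rw [hdq] at this
      have : D q.2 q.1 = false := by
        cases hdd : D q.2 q.1
        · rfl
        · rw [hdd] at this; simp at this
      rw [h1, h2] at hdp
      rw [hdp] at this; exact absurd this (by simp)

lemma swap_le {n : ℕ} (G : SimpleGraph (Fin n)) [DecidableRel G.Adj] :
    (arcSet (fun u v : Fin n => decide (G.Adj u v ∧ u < v)) n).card ≤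
    (arcSet (fun u v : Fin n => decide (G.Adj u v ∧ v < u)) n).card := by
  apply Finset.card_le_card_of_injOn Prod.swap
  · intro p hp
    rw [Finset.mem_coe, mem_arcSet] at hp ⊢
    obtain ⟨-, hd⟩ := hp
    rw [decide_eq_true_iff] at hd
    exact ⟨p.2.isLt, decide_eq_true_iff.mpr ⟨hd.1.symm, hd.2⟩⟩
  · intro p _ q _ h
    exact Prod.swap_injective h

theorem outDeg_left_preceq_preceq_right {n : ℕ} (G : SimpleGraph (Fin n))
    [DecidableRel G.Adj] (D : Fin n → Fin n → Bool) (hD : IsOrientation G D) :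
    Preceq (outDeg (fun u v => decide (G.Adj u v ∧ v < u))) (outDeg D) ∧
    Preceq (outDeg D) (outDeg (fun u v => decide (G.Adj u v ∧ u < v))) := by
  have hl : ∀ k, partialSum (outDeg (fun u v => decide (G.Adj u v ∧ v < u))) k ≤
      partialSum (outDeg D) k := fun k => by
    rw [psum_eq, psum_eq]; exact left_le G D hD k
  have hr : ∀ k, partialSum (outDeg D) k ≤
      partialSum (outDeg (fun u v => decide (G.Adj u v ∧ u < v))) k := fun k => by
    rw [psum_eq, psum_eq]; exact right_le G D hD k
  have hs : partialSum (outDeg (fun u v => decide (G.Adj u v ∧ u < v))) n ≤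
      partialSum (outDeg (fun u v => decide (G.Adj u v ∧ v < u))) n := by
    rw [psum_eq, psum_eq]; exact swap_le G
  exact ⟨⟨fun k _ => hl k, le_antisymm (hl n) (le_trans (hr n) hs)⟩,
    ⟨fun k _ => hr k, le_antisymm (hr n) (le_trans hs (hl n))⟩⟩
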